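/- Let A be a bounded linear operator on a complex Hilbert space with polar decomposition A = U|A| and let r ≥ 1. Then w(A)^r ≤ (1/2)(‖A‖^r + w(|A|^{1/2} U |A|^{1/2})^r). -/

import Mathlib

noncomputable section
open ContinuousLinearMap

variable {H : Type*} [NormedAddCommGroup H] [InnerProductSpace ℂ H] [CompleteSpace H]

/-- The numerical radius of a bounded operator. -/
def nrad (A : H →L[ℂ] H) : ℝ :=
  sSup {r : ℝ | ∃ x : H, ‖x‖ = 1 ∧ r = ‖(inner ℂ (A x) x : ℂ)‖}

/-- The absolute value |A| = (A*A)^(1/2) via continuous functional calculus. -/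
def oabs (A : H →L[ℂ] H) : H →L[ℂ] H := cfc Real.sqrt (adjoint A * A)

/-- The 2×2 block operator matrix [[A,B],[C,D]] on the Hilbert space H ⊕ H. -/
def blk (A B C D : H →L[ℂ] H) : WithLp 2 (H × H) →L[ℂ] WithLp 2 (H × H) :=
  ((WithLp.prodContinuousLinearEquiv 2 ℂ H H).symm.toContinuousLinearMap).comp
    ((((A.comp (fst ℂ H H)) + B.comp (snd ℂ H H)).prod
      ((C.comp (fst ℂ H H)) + D.comp (snd ℂ H H))).comp
      (WithLp.prodContinuousLinearEquiv 2 ℂ H H).toContinuousLinearMap)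

open scoped InnerProductSpace in
set_option linter.unusedSectionVars false in
private lemma nrad_bddAbove' (T : H →L[ℂ] H) :
    BddAbove {r : ℝ | ∃ x : H, ‖x‖ = 1 ∧ r = ‖(inner ℂ (T x) x : ℂ)‖} := by
  refine ⟨‖T‖, ?_⟩
  rintro r ⟨x, hx, rfl⟩
  calc ‖(⟪T x, x⟫_ℂ)‖ ≤ ‖T x‖ * ‖x‖ := norm_inner_le_norm _ _
    _ ≤ ‖T‖ * ‖x‖ * ‖x‖ := by
        gcongr
        exact T.le_opNorm x
    _ = ‖T‖ := by rw [hx]; ring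

set_option linter.unusedSectionVars false in
private lemma nrad_nonneg' (T : H →L[ℂ] H) : 0 ≤ nrad T :=
  Real.sSup_nonneg (by rintro r ⟨x, hx, rfl⟩; positivity)

open scoped InnerProductSpace in
set_option linter.unusedSectionVars false in
private lemma nrad_le' (T : H →L[ℂ] H) {c : ℝ} (hc : 0 ≤ c)
    (h : ∀ x : H, ‖x‖ = 1 → ‖(⟪T x, x⟫_ℂ)‖ ≤ c) : nrad T ≤ c :=
  Real.sSup_le (by rintro r ⟨x, hx, rfl⟩; exact h x hx) hc

open scoped InnerProductSpace in
set_option linter.unusedSectionVars false in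
private lemma inner_le_nrad' (T : H →L[ℂ] H) (y : H) :
    ‖(⟪T y, y⟫_ℂ)‖ ≤ nrad T * ‖y‖ ^ 2 := by
  rcases eq_or_ne y 0 with rfl | hy
  · simp
  · have hny : (0:ℝ) < ‖y‖ := norm_pos_iff.2 hy
    set x : H := ((‖y‖ : ℂ))⁻¹ • y with hxdef
    have hx : ‖x‖ = 1 := by
      rw [hxdef, norm_smul]
      simp [hny.ne']
    have hmem : ‖(⟪T x, x⟫_ℂ)‖ ∈
        {r : ℝ | ∃ x : H, ‖x‖ = 1 ∧ r = ‖(inner ℂ (T x) x : ℂ)‖} := ⟨x, hx, rfl⟩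
    have hle : ‖(⟪T x, x⟫_ℂ)‖ ≤ nrad T := le_csSup (nrad_bddAbove' T) hmem
    have hTx : ⟪T x, x⟫_ℂ = ((‖y‖:ℂ))⁻¹ * (starRingEnd ℂ ((‖y‖:ℂ))⁻¹) * ⟪T y, y⟫_ℂ := by
      rw [hxdef, map_smul, inner_smul_left, inner_smul_right]; ring
    have hnorm : ‖(⟪T x, x⟫_ℂ)‖ = (‖y‖^2)⁻¹ * ‖(⟪T y, y⟫_ℂ)‖ := by
      rw [hTx]
      simp [norm_mul, sq]
    rw [hnorm] at hle
    have h2 := (inv_mul_le_iff₀ (by positivity : (0:ℝ) < ‖y‖^2)).mp hle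
    rwa [mul_comm] at h2

private lemma half_rpow_le' {x y p : ℝ} (hx : 0 ≤ x) (hy : 0 ≤ y) (hp : 1 ≤ p) :
    ((x + y) / 2) ^ p ≤ (x ^ p + y ^ p) / 2 := by
  have h := NNReal.rpow_arith_mean_le_arith_mean2_rpow (1/2) (1/2)
    x.toNNReal y.toNNReal (add_halves 1) hp
  have h2 := NNReal.coe_le_coe.mpr h
  push_cast [NNReal.coe_rpow, Real.coe_toNNReal x hx, Real.coe_toNNReal y hy] at h2
  have hxy : (x + y) / 2 = 1/2 * x + 1/2 * y := by ring
  rw [hxy]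
  linarith [h2]

open scoped InnerProductSpace
set_option maxHeartbeats 1000000

theorem stmt_3 (A U : H →L[ℂ] H)
    (hU : A = U * oabs A)
    (hker : LinearMap.ker (U : H →ₗ[ℂ] H) = (LinearMap.range (oabs A : H →ₗ[ℂ] H))ᗮ)
    (hiso : ∀ x ∈ (LinearMap.ker (U : H →ₗ[ℂ] H))ᗮ, ‖U x‖ = ‖x‖)
    (r : ℝ) (hr : 1 ≤ r) :
    nrad A ^ r ≤ (1 / 2) * (‖A‖ ^ r
      + nrad (cfc Real.sqrt (oabs A) * U * cfc Real.sqrt (oabs A)) ^ r) := by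
  set P := oabs A with hPdef
  set Q := cfc Real.sqrt P with hQdef
  -- basic cfc facts
  have hAA : (0 : H →L[ℂ] H) ≤ adjoint A * A := by
    simpa [star_eq_adjoint] using star_mul_self_nonneg A
  have hAAsa : IsSelfAdjoint (adjoint A * A) := .of_nonneg hAA
  have hP0 : (0 : H →L[ℂ] H) ≤ P := by
    rw [hPdef, oabs]; exact cfc_nonneg fun x _ => Real.sqrt_nonneg x
  have hPsa : IsSelfAdjoint P := .of_nonneg hP0
  have hQ0 : (0 : H →L[ℂ] H) ≤ Q := by
    rw [hQdef]; exact cfc_nonneg fun x _ => Real.sqrt_nonneg x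
  have hQsa : IsSelfAdjoint Q := .of_nonneg hQ0
  have hP2 : P * P = adjoint A * A := by
    rw [hPdef, oabs, ← cfc_mul Real.sqrt Real.sqrt (adjoint A * A)]
    have h1 : (spectrum ℝ (adjoint A * A)).EqOn (fun x => Real.sqrt x * Real.sqrt x) id :=
      fun x hx => Real.mul_self_sqrt (spectrum_nonneg_of_nonneg hAA hx)
    rw [cfc_congr h1, cfc_id ℝ (adjoint A * A)]
  have hQ2 : Q * Q = P := by
    rw [hQdef, ← cfc_mul Real.sqrt Real.sqrt P]
    have h1 : (spectrum ℝ P).EqOn (fun x => Real.sqrt x * Real.sqrt x) id :=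
      fun x hx => Real.mul_self_sqrt (spectrum_nonneg_of_nonneg hP0 hx)
    rw [cfc_congr h1, cfc_id ℝ P]
  have hQadj : adjoint Q = Q := by rw [← star_eq_adjoint]; exact hQsa.star_eq
  have hPadj : adjoint P = P := by rw [← star_eq_adjoint]; exact hPsa.star_eq
  have hQin : ∀ v w : H, ⟪Q v, w⟫_ℂ = ⟪v, Q w⟫_ℂ := by
    intro v w
    conv_lhs => rw [← hQadj]
    exact adjoint_inner_left Q w v
  have hPin : ∀ v w : H, ⟪P v, w⟫_ℂ = ⟪v, P w⟫_ℂ := by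
    intro v w
    conv_lhs => rw [← hPadj]
    exact adjoint_inner_left P w v
  -- ‖P v‖ = ‖A v‖
  have hPApt : ∀ v : H, ‖P v‖ = ‖A v‖ := by
    intro v
    have e0 : ⟪P v, P v⟫_ℂ = ⟪A v, A v⟫_ℂ := by
      calc ⟪P v, P v⟫_ℂ = ⟪v, P (P v)⟫_ℂ := hPin v (P v)
        _ = ⟪v, (P * P) v⟫_ℂ := by rw [mul_apply_eq_comp]
        _ = ⟪v, adjoint A (A v)⟫_ℂ := by rw [hP2, mul_apply_eq_comp]
        _ = ⟪A v, A v⟫_ℂ := adjoint_inner_right A v (A v)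
    have h1 := (inner_self_eq_norm_sq_to_K (𝕜 := ℂ) (P v)).symm.trans
      (e0.trans (inner_self_eq_norm_sq_to_K (𝕜 := ℂ) (A v)))
    have h2 : (‖P v‖ : ℝ) ^ 2 = ‖A v‖ ^ 2 := by exact_mod_cast h1
    nlinarith [norm_nonneg (P v), norm_nonneg (A v)]
  -- ‖Q v‖² ≤ ‖A‖ ‖v‖²
  have hQA : ∀ v : H, ‖Q v‖ ^ 2 ≤ ‖A‖ * ‖v‖ ^ 2 := by
    intro v
    have e0 : ⟪Q v, Q v⟫_ℂ = ⟪P v, v⟫_ℂ := by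
      calc ⟪Q v, Q v⟫_ℂ = ⟪v, Q (Q v)⟫_ℂ := hQin v (Q v)
        _ = ⟪v, (Q * Q) v⟫_ℂ := by rw [mul_apply_eq_comp]
        _ = ⟪v, P v⟫_ℂ := by rw [hQ2]
        _ = ⟪P v, v⟫_ℂ := (hPin v v).symm
    have h2 : ‖Q v‖ ^ 2 = ‖(⟪P v, v⟫_ℂ)‖ := by
      rw [← e0, inner_self_eq_norm_sq_to_K (𝕜 := ℂ) (Q v)]
      simp [norm_pow, sq_abs]
    rw [h2]
    calc ‖(⟪P v, v⟫_ℂ)‖ ≤ ‖P v‖ * ‖v‖ := norm_inner_le_norm _ _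
      _ = ‖A v‖ * ‖v‖ := by rw [hPApt]
      _ ≤ (‖A‖ * ‖v‖) * ‖v‖ := by gcongr; exact A.le_opNorm v
      _ = ‖A‖ * ‖v‖ ^ 2 := by ring
  -- Q v lies in (ker U)ᗮ, hence U is isometric on range Q
  have hQzero : ∀ u : H, u ∈ (LinearMap.range (P : H →ₗ[ℂ] H))ᗮ → Q u = 0 := by
    intro u hu
    have hPu : ⟪P u, u⟫_ℂ = 0 :=
      (Submodule.mem_orthogonal _ _).mp hu (P u) ⟨u, rfl⟩
    have h1 : ⟪Q u, Q u⟫_ℂ = 0 := by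
      calc ⟪Q u, Q u⟫_ℂ = ⟪u, Q (Q u)⟫_ℂ := hQin u (Q u)
        _ = ⟪u, (Q * Q) u⟫_ℂ := by rw [mul_apply_eq_comp]
        _ = ⟪u, P u⟫_ℂ := by rw [hQ2]
        _ = ⟪P u, u⟫_ℂ := (hPin u u).symm
        _ = 0 := hPu
    exact inner_self_eq_zero.mp h1
  have hUQ : ∀ v : H, ‖U (Q v)‖ = ‖Q v‖ := by
    intro v
    apply hiso
    rw [hker]
    rw [Submodule.mem_orthogonal]
    intro u hu
    calc ⟪u, Q v⟫_ℂ = ⟪Q u, v⟫_ℂ := (hQin u v).symm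
      _ = 0 := by rw [hQzero u hu]; exact inner_zero_left v
  -- main numerical radius bound
  set W := nrad (Q * U * Q) with hWdef
  have hW0 : 0 ≤ W := nrad_nonneg' _
  have hA0 : (0:ℝ) ≤ ‖A‖ := norm_nonneg _
  have key : nrad A ≤ (‖A‖ + W) / 2 := by
    apply nrad_le' _ (by positivity)
    intro x hx
    set c := ⟪A x, x⟫_ℂ with hcdef
    obtain ⟨μ, hμ1, hμ2⟩ : ∃ μ : ℂ, ‖μ‖ = 1 ∧ μ * c = (‖c‖ : ℂ) := by
      rcases eq_or_ne c 0 with h | h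
      · exact ⟨1, by simp [h]⟩
      · refine ⟨(starRingEnd ℂ) c / ‖c‖, ?_, ?_⟩
        · rw [norm_div]
          simp [h]
        · rw [div_mul_eq_mul_div, RCLike.conj_mul, sq]
          have hc0 : (‖c‖ : ℂ) ≠ 0 := by exact_mod_cast norm_ne_zero_iff.mpr h
          field_simp
          rfl
    set p := Q x with hpdef
    set q := Q (adjoint U x) with hqdef
    have hAx : A x = U (Q (Q x)) := by
      rw [hU, ← hQ2]
      rfl
    have hc2 : c = ⟪p, q⟫_ℂ := by
      rw [hcdef, hAx]
      calc ⟪U (Q (Q x)), x⟫_ℂ = ⟪Q (Q x), adjoint U x⟫_ℂ :=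
            (adjoint_inner_right U (Q (Q x)) x).symm
        _ = ⟪Q x, Q (adjoint U x)⟫_ℂ := hQin (Q x) (adjoint U x)
    have hcs : ‖c‖ ≤ ‖p‖ * ‖q‖ := by rw [hc2]; exact norm_inner_le_norm p q
    have h2 : 2 * ‖c‖ ≤ ‖p‖ ^ 2 + ‖q‖ ^ 2 := by
      nlinarith [sq_nonneg (‖p‖ - ‖q‖), norm_nonneg p, norm_nonneg q]
    -- the operator K
    set K : H →L[ℂ] H := (starRingEnd ℂ μ) • (U ∘L Q) + Q with hKdef
    have hKadj : adjoint K = μ • (Q ∘L adjoint U) + Q := by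
      rw [← star_eq_adjoint]
      rw [hKdef, star_add, star_smul]
      rw [star_eq_adjoint (U ∘L Q), adjoint_comp, star_eq_adjoint Q, hQadj]
      congr 1
      simp
    have hw : adjoint K x = μ • q + p := by
      rw [hKadj]
      rfl
    have hwn : ‖adjoint K x‖ ^ 2 = ‖q‖ ^ 2 + 2 * ‖c‖ + ‖p‖ ^ 2 := by
      rw [hw, norm_add_sq (𝕜 := ℂ)]
      have h1 : ‖μ • q‖ = ‖q‖ := by rw [norm_smul, hμ1, one_mul]
      have hqp : ⟪μ • q, p⟫_ℂ = (‖c‖ : ℂ) := by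
        rw [inner_smul_left]
        have hqp' : ⟪q, p⟫_ℂ = (starRingEnd ℂ) c := by
          rw [hc2, ← inner_conj_symm p q, Complex.conj_conj]
        rw [hqp', ← map_mul, hμ2]
        exact Complex.conj_ofReal _
      rw [h1, hqp]
      simp
    have hwle : ‖adjoint K x‖ ≤ ‖K‖ := by
      calc ‖adjoint K x‖ ≤ ‖adjoint K‖ * ‖x‖ := le_opNorm _ _
        _ = ‖K‖ := by rw [hx, mul_one, adjoint.norm_map]
    have hKb : ∀ v : H, ‖K v‖ ^ 2 ≤ (2 * ‖A‖ + 2 * W) * ‖v‖ ^ 2 := by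
      intro v
      have hKv : K v = (starRingEnd ℂ μ) • U (Q v) + Q v := rfl
      rw [hKv, norm_add_sq (𝕜 := ℂ)]
      have h1 : ‖(starRingEnd ℂ μ) • U (Q v)‖ = ‖Q v‖ := by
        rw [norm_smul, hUQ]
        simp [hμ1]
      have hTv : ⟪(Q * U * Q) v, v⟫_ℂ = ⟪U (Q v), Q v⟫_ℂ := by
        calc ⟪(Q * U * Q) v, v⟫_ℂ = ⟪Q (U (Q v)), v⟫_ℂ := rfl
          _ = ⟪U (Q v), Q v⟫_ℂ := hQin (U (Q v)) v
      have h2' : ⟪(starRingEnd ℂ μ) • U (Q v), Q v⟫_ℂ = μ * ⟪(Q * U * Q) v, v⟫_ℂ := by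
        rw [inner_smul_left, hTv]
        simp
      have h3 : RCLike.re (μ * ⟪(Q * U * Q) v, v⟫_ℂ) ≤ W * ‖v‖ ^ 2 := by
        calc RCLike.re (μ * ⟪(Q * U * Q) v, v⟫_ℂ) ≤ ‖μ * ⟪(Q * U * Q) v, v⟫_ℂ‖ :=
              RCLike.re_le_norm _
          _ = ‖(⟪(Q * U * Q) v, v⟫_ℂ)‖ := by rw [norm_mul, hμ1, one_mul]
          _ ≤ W * ‖v‖ ^ 2 := by rw [hWdef]; exact inner_le_nrad' _ v
      have h4 : ‖Q v‖ ^ 2 ≤ ‖A‖ * ‖v‖ ^ 2 := hQA v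
      rw [h1, h2']
      nlinarith [h3, h4]
    have hb0 : (0:ℝ) ≤ 2 * ‖A‖ + 2 * W := by positivity
    have hKn : ‖K‖ ≤ Real.sqrt (2 * ‖A‖ + 2 * W) := by
      apply opNorm_le_bound _ (Real.sqrt_nonneg _)
      intro v
      have h5 : ‖K v‖ ≤ Real.sqrt ((2 * ‖A‖ + 2 * W) * ‖v‖ ^ 2) := by
        rw [← Real.sqrt_sq (norm_nonneg (K v))]
        exact Real.sqrt_le_sqrt (hKb v)
      rwa [Real.sqrt_mul hb0, Real.sqrt_sq (norm_nonneg v)] at h5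
    have hK2 : ‖K‖ ^ 2 ≤ 2 * ‖A‖ + 2 * W := by
      have h6 := pow_le_pow_left₀ (norm_nonneg K) hKn 2
      rwa [Real.sq_sqrt hb0] at h6
    have h7 : ‖adjoint K x‖ ^ 2 ≤ ‖K‖ ^ 2 := pow_le_pow_left₀ (norm_nonneg _) hwle 2
    linarith [hwn ▸ h7, h2, hK2]
  -- conclude with convexity of rpow
  have h0 : 0 ≤ nrad A := nrad_nonneg' A
  have hr0 : (0:ℝ) ≤ r := le_trans zero_le_one hr
  calc nrad A ^ r ≤ ((‖A‖ + W) / 2) ^ r := Real.rpow_le_rpow h0 key hr0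
    _ ≤ (‖A‖ ^ r + W ^ r) / 2 := half_rpow_le' hA0 hW0 hr
    _ = 1 / 2 * (‖A‖ ^ r + W ^ r) := by ring
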